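/- Let 𝒟 be a small category and 𝒞 ⊆ 𝒟 a full subcategory such that for every object d of 𝒟 not lying in 𝒞 there is no morphism in 𝒟 from d to any object of 𝒞. Define the contravariant functor ℤ_𝒞 from 𝒟 to abelian groups by ℤ_𝒞(d) = ℤ if d ∈ 𝒞 and ℤ_𝒞(d) = 0 otherwise, where for a morphism f : d → d' in 𝒟 the induced map ℤ_𝒞(d') → ℤ_𝒞(d) is the identity of ℤ when both d and d' lie in 𝒞, and zero otherwise (under the stated hypothesis this is a well-defined functor). Then for every contravariant functor M from 𝒟 to abelian groups and every s ≥ 0, there is an isomorphism of abelian groups Ext^s(ℤ_𝒞, M) ≅ Ext^s(ℤ, M|_𝒞), where the left-hand Ext is computed in the abelian category of contravariant functors 𝒟 → Ab, the right-hand Ext is computed in the abelian category of contravariant functors 𝒞 → Ab, and ℤ denotes the constant functor with value ℤ. -/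

import Mathlib

open CategoryTheory

open scoped Classical

universe u

variable {𝒟 : Type} [SmallCategory 𝒟]

/-- The value of the functor `ℤ_𝒞`: `ℤ` on objects satisfying `P`, and `0` otherwise. -/
noncomputable def ZCobj (P : 𝒟 → Prop) (d : 𝒟) : AddCommGrpCat :=
  if P d then AddCommGrpCat.of ℤ else AddCommGrpCat.of PUnit

/-- The action of the functor `ℤ_𝒞` on morphisms: the identity of `ℤ` when both objects
satisfy `P`, and zero otherwise. -/
noncomputable def ZCmap (P : 𝒟 → Prop) {a b : 𝒟} (_ : a ⟶ b) : ZCobj P b ⟶ ZCobj P a :=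
  if hb : P b then
    if ha : P a then eqToHom (by simp [ZCobj, ha, hb]) else 0
  else 0

lemma ZCobj_subsingleton {P : 𝒟 → Prop} {d : 𝒟} (hd : ¬ P d) : Subsingleton (ZCobj P d) := by
  simp only [ZCobj, if_neg hd]
  infer_instance

lemma ZCmap_id (P : 𝒟 → Prop) (a : 𝒟) : ZCmap P (𝟙 a) = 𝟙 (ZCobj P a) := by
  by_cases ha : P a
  · simp [ZCmap, ha]
  · haveI := ZCobj_subsingleton ha
    simp only [ZCmap, dif_neg ha]
    ext x
    exact Subsingleton.elim _ _

lemma ZCmap_comp (P : 𝒟 → Prop)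
    (H : ∀ ⦃x y : 𝒟⦄, ¬ P x → P y → (x ⟶ y) → False)
    {a b c : 𝒟} (u : a ⟶ b) (v : b ⟶ c) :
    ZCmap P (u ≫ v) = ZCmap P v ≫ ZCmap P u := by
  by_cases hc : P c
  · have hb : P b := by
      by_contra hb
      exact H hb hc v
    have ha : P a := by
      by_contra ha
      exact H ha hb u
    simp [ZCmap, ha, hb, hc]
  · simp [ZCmap, hc]

/-- The contravariant functor `ℤ_𝒞 : 𝒟ᵒᵖ ⥤ Ab` which is `ℤ` on objects of the full
subcategory `𝒞` cut out by `P` (with identity transition maps) and `0` elsewhere; this is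
a well-defined functor because no object outside `𝒞` admits a morphism into `𝒞`. -/
noncomputable def ZC (P : 𝒟 → Prop)
    (H : ∀ ⦃x y : 𝒟⦄, ¬ P x → P y → (x ⟶ y) → False) :
    𝒟ᵒᵖ ⥤ AddCommGrpCat where
  obj d := ZCobj P d.unop
  map f := ZCmap P f.unop
  map_id d := ZCmap_id P d.unop
  map_comp f g := ZCmap_comp P H g.unop f.unop

namespace ExtZero

open Opposite Limits

lemma hom_ext_from {G H : AddCommGrpCat} [Subsingleton G] (f g : G ⟶ H) : f = g := by
  ext x
  rw [Subsingleton.elim x 0, map_zero, map_zero]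

lemma hom_ext_to {G H : AddCommGrpCat} [Subsingleton H] (f g : G ⟶ H) : f = g := by
  ext x
  exact Subsingleton.elim _ _

variable (P : 𝒟 → Prop)

/-- morphism of the full subcategory induced by a morphism of `𝒟` -/
def toC {a b : 𝒟} (ha : P a) (hb : P b) (f : a ⟶ b) :
    (⟨a, ha⟩ : ObjectProperty.FullSubcategory P) ⟶ ⟨b, hb⟩ := ObjectProperty.homMk f

lemma toC_id {a : 𝒟} (ha : P a) : toC P ha ha (𝟙 a) = 𝟙 _ := rfl

lemma toC_comp {a b c : 𝒟} (ha : P a) (hb : P b) (hc : P c) (u : a ⟶ b) (v : b ⟶ c) :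
    toC P ha hc (u ≫ v) = toC P ha hb u ≫ toC P hb hc v := rfl

/-- value of the extension-by-zero functor -/
noncomputable def eVal (X : (ObjectProperty.FullSubcategory P)ᵒᵖ ⥤ AddCommGrpCat) (a : 𝒟) : AddCommGrpCat :=
  if h : P a then X.obj (op (⟨a, h⟩ : ObjectProperty.FullSubcategory P)) else AddCommGrpCat.of PUnit

lemma eVal_subsingleton {X : (ObjectProperty.FullSubcategory P)ᵒᵖ ⥤ AddCommGrpCat} {a : 𝒟} (h : ¬ P a) :
    Subsingleton (eVal P X a) := by
  simp only [eVal, dif_neg h]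
  infer_instance

noncomputable def eValIso (X : (ObjectProperty.FullSubcategory P)ᵒᵖ ⥤ AddCommGrpCat) {a : 𝒟} (h : P a) :
    eVal P X a ≅ X.obj (op (⟨a, h⟩ : ObjectProperty.FullSubcategory P)) :=
  eqToIso (by simp only [eVal, dif_pos h])

noncomputable def eMap (X : (ObjectProperty.FullSubcategory P)ᵒᵖ ⥤ AddCommGrpCat) {a b : 𝒟} (f : a ⟶ b) :
    eVal P X b ⟶ eVal P X a :=
  if hb : P b then
    if ha : P a then
      (eValIso P X hb).hom ≫ X.map (toC P ha hb f).op ≫ (eValIso P X ha).inv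
    else 0
  else 0

lemma eMap_pos (X : (ObjectProperty.FullSubcategory P)ᵒᵖ ⥤ AddCommGrpCat) {a b : 𝒟} (f : a ⟶ b)
    (ha : P a) (hb : P b) :
    eMap P X f = (eValIso P X hb).hom ≫ X.map (toC P ha hb f).op ≫ (eValIso P X ha).inv := by
  simp [eMap, dif_pos ha, dif_pos hb]

lemma eMap_id (X : (ObjectProperty.FullSubcategory P)ᵒᵖ ⥤ AddCommGrpCat) (a : 𝒟) :
    eMap P X (𝟙 a) = 𝟙 (eVal P X a) := by
  by_cases ha : P a
  · rw [eMap_pos P X _ ha ha, toC_id]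
    simp
  · haveI := eVal_subsingleton P (X := X) ha
    exact hom_ext_from _ _

lemma eMap_comp (H : ∀ ⦃x y : 𝒟⦄, ¬ P x → P y → (x ⟶ y) → False)
    (X : (ObjectProperty.FullSubcategory P)ᵒᵖ ⥤ AddCommGrpCat)
    {a b c : 𝒟} (u : a ⟶ b) (v : b ⟶ c) :
    eMap P X (u ≫ v) = eMap P X v ≫ eMap P X u := by
  by_cases hc : P c
  · have hb : P b := by by_contra hb; exact H hb hc v
    have ha : P a := by by_contra ha; exact H ha hb u
    rw [eMap_pos P X _ ha hc, eMap_pos P X _ hb hc, eMap_pos P X _ ha hb,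
      toC_comp P ha hb hc, op_comp, X.map_comp]
    simp
  · simp [eMap, dif_neg hc]


variable {P}

noncomputable def eHomApp {X Y : (ObjectProperty.FullSubcategory P)ᵒᵖ ⥤ AddCommGrpCat} (η : X ⟶ Y) (a : 𝒟) :
    eVal P X a ⟶ eVal P Y a :=
  if h : P a then (eValIso P X h).hom ≫ η.app (op ⟨a, h⟩) ≫ (eValIso P Y h).inv else 0

lemma eHomApp_pos {X Y : (ObjectProperty.FullSubcategory P)ᵒᵖ ⥤ AddCommGrpCat} (η : X ⟶ Y) {a : 𝒟} (h : P a) :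
    eHomApp η a = (eValIso P X h).hom ≫ η.app (op ⟨a, h⟩) ≫ (eValIso P Y h).inv := by
  simp [eHomApp, dif_pos h]

variable (P) (H : ∀ ⦃x y : 𝒟⦄, ¬ P x → P y → (x ⟶ y) → False)

lemma eHom_natural {X Y : (ObjectProperty.FullSubcategory P)ᵒᵖ ⥤ AddCommGrpCat} (η : X ⟶ Y)
    {a b : 𝒟} (f : a ⟶ b) :
    eMap P X f ≫ eHomApp η a = eHomApp η b ≫ eMap P Y f := by
  by_cases hb : P b
  · by_cases ha : P a
    · rw [eMap_pos P X f ha hb, eMap_pos P Y f ha hb, eHomApp_pos η ha, eHomApp_pos η hb]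
      simp only [Category.assoc, Iso.inv_hom_id_assoc, NatTrans.naturality_assoc]
    · simp only [eMap, eHomApp, dif_pos hb, dif_neg ha, comp_zero, zero_comp]
  · haveI := eVal_subsingleton P (X := X) hb
    exact hom_ext_from _ _

/-- Extension by zero of functors `(ObjectProperty.FullSubcategory P)ᵒᵖ ⥤ AddCommGrpCat` to `𝒟ᵒᵖ ⥤ AddCommGrpCat`. -/
noncomputable def eFunctor :
    ((ObjectProperty.FullSubcategory P)ᵒᵖ ⥤ AddCommGrpCat) ⥤ (𝒟ᵒᵖ ⥤ AddCommGrpCat) where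
  obj X :=
    { obj := fun d => eVal P X d.unop
      map := fun φ => eMap P X φ.unop
      map_id := fun d => eMap_id P X d.unop
      map_comp := fun φ ψ => eMap_comp P H X ψ.unop φ.unop }
  map η :=
    { app := fun d => eHomApp η d.unop
      naturality := fun d d' φ => eHom_natural P η φ.unop }
  map_id X := by
    refine NatTrans.ext (funext fun d => ?_)
    by_cases h : P d.unop
    · show eHomApp (𝟙 X) d.unop = _
      rw [eHomApp_pos (𝟙 X) h]
      simp
    · exact @hom_ext_from _ _ (eVal_subsingleton P (X := X) h) _ _
  map_comp {X Y Z} η θ := by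
    refine NatTrans.ext (funext fun d => ?_)
    by_cases h : P d.unop
    · show eHomApp (η ≫ θ) d.unop = eHomApp η d.unop ≫ eHomApp θ d.unop
      rw [eHomApp_pos (η ≫ θ) h, eHomApp_pos η h, eHomApp_pos θ h]
      simp
    · exact @hom_ext_from _ _ (eVal_subsingleton P (X := X) h) _ _

instance eFunctor_additive : (eFunctor P H).Additive where
  map_add {X Y f g} := by
    refine NatTrans.ext (funext fun d => ?_)
    rw [NatTrans.app_add]
    by_cases h : P d.unop
    · show eHomApp (f + g) d.unop = eHomApp f d.unop + eHomApp g d.unop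
      rw [eHomApp_pos (f + g) h, eHomApp_pos f h, eHomApp_pos g h, NatTrans.app_add]
      simp [Preadditive.add_comp, Preadditive.comp_add]
    · exact @hom_ext_from _ _ (eVal_subsingleton P (X := X) h) _ _

/-- The constant functor at the zero group preserves all limits. -/
lemma constPUnit_preservesLimitsOfShape (C : Type*) [Category C] (J : Type*) [Category J] :
    PreservesLimitsOfShape J ((Functor.const C).obj (AddCommGrpCat.of PUnit)) where
  preservesLimit := {
    preserves := fun _ => ⟨{
      lift := fun _ => 0
      fac := fun _ _ => @hom_ext_to _ _ (inferInstanceAs (Subsingleton PUnit)) _ _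
      uniq := fun _ _ _ => @hom_ext_to _ _ (inferInstanceAs (Subsingleton PUnit)) _ _ }⟩ }

lemma constPUnit_preservesColimitsOfShape (C : Type*) [Category C] (J : Type*) [Category J] :
    PreservesColimitsOfShape J ((Functor.const C).obj (AddCommGrpCat.of PUnit)) where
  preservesColimit := {
    preserves := fun _ => ⟨{
      desc := fun _ => 0
      fac := fun _ _ => @hom_ext_from _ _ (inferInstanceAs (Subsingleton PUnit)) _ _
      uniq := fun _ _ _ => @hom_ext_from _ _ (inferInstanceAs (Subsingleton PUnit)) _ _ }⟩ }

/-- On objects of the subcategory, `eFunctor` composed with evaluation is evaluation. -/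
noncomputable def eCompEvalPos {d : 𝒟ᵒᵖ} (h : P d.unop) :
    eFunctor P H ⋙ (evaluation 𝒟ᵒᵖ AddCommGrpCat).obj d ≅
      (evaluation (ObjectProperty.FullSubcategory P)ᵒᵖ AddCommGrpCat).obj (op ⟨d.unop, h⟩) :=
  NatIso.ofComponents (fun X => eValIso P X h) (by
    intro X Y η
    show eHomApp η d.unop ≫ _ = _
    rw [eHomApp_pos η h]
    simp
    rfl)

/-- Outside the subcategory, `eFunctor` composed with evaluation is constant zero. -/
noncomputable def eCompEvalNeg {d : 𝒟ᵒᵖ} (h : ¬ P d.unop) :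
    eFunctor P H ⋙ (evaluation 𝒟ᵒᵖ AddCommGrpCat).obj d ≅
      (Functor.const ((ObjectProperty.FullSubcategory P)ᵒᵖ ⥤ AddCommGrpCat)).obj (AddCommGrpCat.of PUnit) :=
  NatIso.ofComponents (fun X => eqToIso (by
      show eVal P X d.unop = _
      rw [eVal, dif_neg h]
      rfl))
    (by intro X Y η; exact @hom_ext_to _ _ (inferInstanceAs (Subsingleton PUnit)) _ _)

lemma eFunctor_preservesFiniteLimits : PreservesFiniteLimits (eFunctor P H) := by
  constructor
  intro J _ _
  refine preservesLimitsOfShape_of_evaluation _ J (fun d => ?_)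
  by_cases h : P d.unop
  · exact preservesLimitsOfShape_of_natIso (eCompEvalPos P H h).symm
  · haveI := constPUnit_preservesLimitsOfShape ((ObjectProperty.FullSubcategory P)ᵒᵖ ⥤ AddCommGrpCat) J
    exact preservesLimitsOfShape_of_natIso (eCompEvalNeg P H h).symm

lemma eFunctor_preservesFiniteColimits : PreservesFiniteColimits (eFunctor P H) := by
  constructor
  intro J _ _
  refine preservesColimitsOfShape_of_evaluation _ J (fun d => ?_)
  by_cases h : P d.unop
  · exact preservesColimitsOfShape_of_natIso (eCompEvalPos P H h).symm
  · haveI := constPUnit_preservesColimitsOfShape ((ObjectProperty.FullSubcategory P)ᵒᵖ ⥤ AddCommGrpCat) J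
    exact preservesColimitsOfShape_of_natIso (eCompEvalNeg P H h).symm

/-- The restriction functor. -/
noncomputable def rFunctor :
    (𝒟ᵒᵖ ⥤ AddCommGrpCat) ⥤ ((ObjectProperty.FullSubcategory P)ᵒᵖ ⥤ AddCommGrpCat) :=
  (Functor.whiskeringLeft _ _ _).obj (ObjectProperty.ι P).op

instance : (rFunctor P).Additive where
  map_add := rfl

variable {P H} in
/-- Forward direction of the adjunction hom equivalence. -/
noncomputable def toRestrict {X : (ObjectProperty.FullSubcategory P)ᵒᵖ ⥤ AddCommGrpCat} {N : 𝒟ᵒᵖ ⥤ AddCommGrpCat}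
    (η : (eFunctor P H).obj X ⟶ N) : X ⟶ (rFunctor P).obj N where
  app c := (eValIso P X c.unop.property).inv ≫ η.app (op c.unop.obj)
  naturality c c' g := by
    have h := η.naturality ((ObjectProperty.ι P).op.map g)
    rw [show ((eFunctor P H).obj X).map ((ObjectProperty.ι P).op.map g) =
        (eValIso P X c.unop.property).hom ≫ X.map g ≫ (eValIso P X c'.unop.property).inv from
      eMap_pos P X _ c'.unop.property c.unop.property] at h
    rw [← cancel_epi (eValIso P X c.unop.property).hom]
    erw [Category.assoc, Iso.hom_inv_id_assoc]
    exact h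

variable {P H} in
lemma toRestrict_app {X : (ObjectProperty.FullSubcategory P)ᵒᵖ ⥤ AddCommGrpCat} {N : 𝒟ᵒᵖ ⥤ AddCommGrpCat}
    (η : (eFunctor P H).obj X ⟶ N) (c : (ObjectProperty.FullSubcategory P)ᵒᵖ) :
    (toRestrict η).app c = (eValIso P X c.unop.property).inv ≫ η.app (op c.unop.obj) := rfl

variable {P H} in
/-- Backward direction of the adjunction hom equivalence. -/
noncomputable def fromRestrict {X : (ObjectProperty.FullSubcategory P)ᵒᵖ ⥤ AddCommGrpCat} {N : 𝒟ᵒᵖ ⥤ AddCommGrpCat}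
    (θ : X ⟶ (rFunctor P).obj N) : (eFunctor P H).obj X ⟶ N where
  app d := if h : P d.unop then (eValIso P X h).hom ≫ θ.app (op ⟨d.unop, h⟩) else 0
  naturality d d' φ := by
    by_cases hd : P d.unop
    · by_cases hd' : P d'.unop
      · rw [show ((eFunctor P H).obj X).map φ = eMap P X φ.unop from rfl,
          eMap_pos P X φ.unop hd' hd, dif_pos hd, dif_pos hd']
        erw [Category.assoc, Category.assoc, Iso.inv_hom_id_assoc]
        erw [θ.naturality (toC P hd' hd φ.unop).op]
        rfl
      · exact (H hd' hd φ.unop).elim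
    · exact @hom_ext_from _ _ (eVal_subsingleton P hd) _ _

variable {P H} in
lemma fromRestrict_app_pos {X : (ObjectProperty.FullSubcategory P)ᵒᵖ ⥤ AddCommGrpCat} {N : 𝒟ᵒᵖ ⥤ AddCommGrpCat}
    (θ : X ⟶ (rFunctor P).obj N) {d : 𝒟ᵒᵖ} (h : P d.unop) :
    (fromRestrict (H := H) θ).app d = (eValIso P X h).hom ≫ θ.app (op ⟨d.unop, h⟩) :=
  dif_pos h

/-- The adjunction between extension by zero and restriction. -/
noncomputable def eAdj : eFunctor P H ⊣ rFunctor P :=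
  Adjunction.mkOfHomEquiv
    { homEquiv := fun X N =>
        { toFun := toRestrict
          invFun := fromRestrict
          left_inv := fun η => by
            refine NatTrans.ext (funext fun d => ?_)
            show (fromRestrict (toRestrict η)).app d = η.app d
            by_cases h : P d.unop
            · rw [fromRestrict_app_pos _ h, toRestrict_app]
              exact Iso.hom_inv_id_assoc _ _
            · exact @hom_ext_from _ _ (eVal_subsingleton P h) _ _
          right_inv := fun θ => by
            refine NatTrans.ext (funext fun c => ?_)
            show (toRestrict (fromRestrict θ)).app c = θ.app c
            rw [toRestrict_app, fromRestrict_app_pos _ c.unop.property]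
            exact Iso.inv_hom_id_assoc _ _ }
      homEquiv_naturality_left_symm := fun {X' X N} f g => by
        refine NatTrans.ext (funext fun d => ?_)
        show (fromRestrict (f ≫ g)).app d = ((eFunctor P H).map f ≫ fromRestrict g).app d
        by_cases h : P d.unop
        · rw [NatTrans.comp_app, fromRestrict_app_pos _ h, fromRestrict_app_pos _ h]
          show _ = eHomApp f d.unop ≫ _
          rw [eHomApp_pos f h]
          simp
        · exact @hom_ext_from _ _ (eVal_subsingleton P h) _ _
      homEquiv_naturality_right := fun {X N N'} η g => by
        refine NatTrans.ext (funext fun c => ?_)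
        show (toRestrict (η ≫ g)).app c = (toRestrict η ≫ (rFunctor P).map g).app c
        simp only [NatTrans.comp_app, toRestrict_app, Category.assoc]
        rfl }

section MapComplexAdjunction

variable {C₁ C₂ : Type*} [Category C₁] [Category C₂] [Preadditive C₁] [Preadditive C₂]
  {F : C₁ ⥤ C₂} {G : C₂ ⥤ C₁} [F.Additive] [G.Additive]

/-- An adjunction between additive functors induces an adjunction between the functors
on categories of homological complexes. -/
noncomputable def mapHomologicalComplexAdjunction (adj : F ⊣ G) {ι : Type*} (c : ComplexShape ι) :
    F.mapHomologicalComplex c ⊣ G.mapHomologicalComplex c :=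
  Adjunction.mkOfUnitCounit
    { unit :=
        { app := fun K =>
            { f := fun i => adj.unit.app (K.X i)
              comm' := fun i j _ => by
                dsimp
                exact (adj.unit.naturality (K.d i j)).symm }
          naturality := fun K L φ => by
            ext i
            dsimp
            exact adj.unit.naturality (φ.f i) }
      counit :=
        { app := fun N =>
            { f := fun i => adj.counit.app (N.X i)
              comm' := fun i j _ => by
                dsimp
                exact (adj.counit.naturality (N.d i j)).symm }
          naturality := fun N N' φ => by
            ext i
            dsimp
            exact adj.counit.naturality (φ.f i) }
      left_triangle := by
        ext K i
        dsimp
        erw [Category.id_comp]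
        exact adj.left_triangle_components (K.X i)
      right_triangle := by
        ext N i
        dsimp
        erw [Category.id_comp]
        exact adj.right_triangle_components (N.X i) }

end MapComplexAdjunction

section MapDerivedAdjunction

variable {C₁ C₂ : Type*} [Category C₁] [Category C₂] [Abelian C₁] [Abelian C₂]
  [HasDerivedCategory C₁] [HasDerivedCategory C₂]
  {F : C₁ ⥤ C₂} {G : C₂ ⥤ C₁} [F.Additive] [G.Additive]
  [PreservesFiniteLimits F] [PreservesFiniteColimits F]
  [PreservesFiniteLimits G] [PreservesFiniteColimits G]

/-- An adjunction between exact functors of abelian categories passes to derived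
categories. -/
noncomputable def mapDerivedCategoryAdjunction (adj : F ⊣ G) :
    F.mapDerivedCategory ⊣ G.mapDerivedCategory := by
  letI : CatCommSq (F.mapHomologicalComplex (ComplexShape.up ℤ)) DerivedCategory.Q
      DerivedCategory.Q F.mapDerivedCategory := ⟨F.mapDerivedCategoryFactors.symm⟩
  letI : CatCommSq (G.mapHomologicalComplex (ComplexShape.up ℤ)) DerivedCategory.Q
      DerivedCategory.Q G.mapDerivedCategory := ⟨G.mapDerivedCategoryFactors.symm⟩
  exact (mapHomologicalComplexAdjunction adj (ComplexShape.up ℤ)).localization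
    DerivedCategory.Q (HomologicalComplex.quasiIso C₁ (ComplexShape.up ℤ))
    DerivedCategory.Q (HomologicalComplex.quasiIso C₂ (ComplexShape.up ℤ))
    F.mapDerivedCategory G.mapDerivedCategory

variable (F) in
/-- `mapDerivedCategory` is compatible with the single functors. -/
noncomputable def mapDerivedCategorySingleIso (X : C₁) :
    F.mapDerivedCategory.obj ((DerivedCategory.singleFunctor C₁ 0).obj X) ≅
      (DerivedCategory.singleFunctor C₂ 0).obj (F.obj X) :=
  F.mapDerivedCategory.mapIso
      (((SingleFunctors.evaluation _ _ 0).mapIso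
        (DerivedCategory.singleFunctorsPostcompQIso C₁)).app X) ≪≫
    F.mapDerivedCategoryFactors.app ((CochainComplex.singleFunctor C₁ 0).obj X) ≪≫
    DerivedCategory.Q.mapIso
      ((HomologicalComplex.singleMapHomologicalComplex F (ComplexShape.up ℤ) (0 : ℤ)).app X) ≪≫
    (((SingleFunctors.evaluation _ _ 0).mapIso
        (DerivedCategory.singleFunctorsPostcompQIso C₂)).app (F.obj X)).symm

end MapDerivedAdjunction


section AddEquivHelpers

/-- `Iso.homCongr` as an additive equivalence. -/
noncomputable def homCongrAddEquiv {C : Type*} [Category C] [Preadditive C] {X X' Y Y' : C}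
    (e₁ : X ≅ X') (e₂ : Y ≅ Y') : (X ⟶ Y) ≃+ (X' ⟶ Y') :=
  { Iso.homCongr e₁ e₂ with
    map_add' := fun f g => by
      simp [Iso.homCongr, Preadditive.add_comp, Preadditive.comp_add] }

/-- The hom equivalence of an adjunction whose right adjoint is additive, as an additive
equivalence. -/
noncomputable def adjHomAddEquiv {C D : Type*} [Category C] [Category D] [Preadditive C]
    [Preadditive D] {F : C ⥤ D} {G : D ⥤ C} (adj : F ⊣ G) [G.Additive] (X : C) (Y : D) :
    (F.obj X ⟶ Y) ≃+ (X ⟶ G.obj Y) :=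
  { adj.homEquiv X Y with
    map_add' := fun f g => by
      simp [Adjunction.homEquiv_unit, Functor.map_add, Preadditive.comp_add] }

end AddEquivHelpers

instance rFunctor_preservesFiniteLimits (P : 𝒟 → Prop) :
    PreservesFiniteLimits (rFunctor P) := by
  constructor
  intro J _ _
  exact inferInstanceAs (PreservesLimitsOfShape J
    ((Functor.whiskeringLeft _ _ _).obj (ObjectProperty.ι P).op))

instance rFunctor_preservesFiniteColimits (P : 𝒟 → Prop) :
    PreservesFiniteColimits (rFunctor P) := by
  constructor
  intro J _ _
  exact inferInstanceAs (PreservesColimitsOfShape J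
    ((Functor.whiskeringLeft _ _ _).obj (ObjectProperty.ι P).op))

variable (P : 𝒟 → Prop) (H : ∀ ⦃x y : 𝒟⦄, ¬ P x → P y → (x ⟶ y) → False) in
/-- The extension by zero of the constant functor `ℤ` is `ℤ_𝒞`. -/
noncomputable def eZIso :
    (eFunctor P H).obj ((Functor.const (ObjectProperty.FullSubcategory P)ᵒᵖ).obj (AddCommGrpCat.of ℤ)) ≅
      ZC P H :=
  NatIso.ofComponents
    (fun d => eqToIso (by
      show eVal P _ d.unop = ZCobj P d.unop
      by_cases h : P d.unop
      · rw [eVal, dif_pos h, ZCobj, if_pos h]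
        rfl
      · rw [eVal, dif_neg h, ZCobj, if_neg h]))
    (by
      intro d d' φ
      by_cases hd' : P d'.unop
      · by_cases hd : P d.unop
        · show eMap P _ φ.unop ≫ _ = _ ≫ ZCmap P φ.unop
          rw [eMap_pos P _ φ.unop hd' hd, show ZCmap P φ.unop = eqToHom (by simp [ZCobj, hd, hd'])
            from by simp [ZCmap, hd, hd']]
          show (_ ≫ ((Functor.const (ObjectProperty.FullSubcategory P)ᵒᵖ).obj
              (AddCommGrpCat.of ℤ)).map (toC P hd' hd φ.unop).op ≫ _) ≫ _ = _
          rw [show ((Functor.const (ObjectProperty.FullSubcategory P)ᵒᵖ).obj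
              (AddCommGrpCat.of ℤ)).map (toC P hd' hd φ.unop).op = 𝟙 _ from rfl]
          simp only [eValIso, eqToIso.hom, eqToIso.inv, Category.id_comp,
            Category.comp_id, eqToHom_trans]
          erw [eqToHom_trans]
        · exact @hom_ext_from _ _ (eVal_subsingleton P hd) _ _
      · exact @hom_ext_to _ _ (ZCobj_subsingleton hd') _ _)

end ExtZero

/-- Base change for derived inverse limits: if `𝒞 ⊆ 𝒟` is a full subcategory such that no
object outside `𝒞` maps into `𝒞`, then for every `M : 𝒟ᵒᵖ ⥤ Ab` and `s ≥ 0` there is an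
isomorphism `Ext^s(ℤ_𝒞, M) ≅ Ext^s(ℤ, M|_𝒞)`, the right side computing the derived functors
`lim^s` of `M` restricted to `𝒞ᵒᵖ`. -/
theorem ext_ZC_iso_ext_restriction (P : 𝒟 → Prop)
    (H : ∀ ⦃x y : 𝒟⦄, ¬ P x → P y → (x ⟶ y) → False)
    (M : 𝒟ᵒᵖ ⥤ AddCommGrpCat) (s : ℕ) :
    haveI : HasDerivedCategory (𝒟ᵒᵖ ⥤ AddCommGrpCat) := HasDerivedCategory.standard _
    haveI : HasDerivedCategory ((ObjectProperty.FullSubcategory P)ᵒᵖ ⥤ AddCommGrpCat) :=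
      HasDerivedCategory.standard _
    haveI : HasExt.{1} (𝒟ᵒᵖ ⥤ AddCommGrpCat) := hasExt_of_hasDerivedCategory _
    haveI : HasExt.{1} ((ObjectProperty.FullSubcategory P)ᵒᵖ ⥤ AddCommGrpCat) := hasExt_of_hasDerivedCategory _
    Nonempty
      (Abelian.Ext (ZC P H) M s ≃+
        Abelian.Ext ((Functor.const (ObjectProperty.FullSubcategory P)ᵒᵖ).obj (AddCommGrpCat.of ℤ))
          ((ObjectProperty.ι P).op ⋙ M) s) := by
  letI : HasDerivedCategory (𝒟ᵒᵖ ⥤ AddCommGrpCat) := HasDerivedCategory.standard _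
  letI : HasDerivedCategory ((ObjectProperty.FullSubcategory P)ᵒᵖ ⥤ AddCommGrpCat) :=
    HasDerivedCategory.standard _
  letI : HasExt.{1} (𝒟ᵒᵖ ⥤ AddCommGrpCat) := hasExt_of_hasDerivedCategory _
  letI : HasExt.{1} ((ObjectProperty.FullSubcategory P)ᵒᵖ ⥤ AddCommGrpCat) := hasExt_of_hasDerivedCategory _
  haveI := ExtZero.eFunctor_preservesFiniteLimits P H
  haveI := ExtZero.eFunctor_preservesFiniteColimits P H
  letI adjD := ExtZero.mapDerivedCategoryAdjunction (ExtZero.eAdj P H)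
  let Zc : (ObjectProperty.FullSubcategory P)ᵒᵖ ⥤ AddCommGrpCat :=
    (Functor.const (ObjectProperty.FullSubcategory P)ᵒᵖ).obj (AddCommGrpCat.of ℤ)
  let isoA : (ExtZero.eFunctor P H).mapDerivedCategory.obj
      ((DerivedCategory.singleFunctor _ 0).obj Zc) ≅
        (DerivedCategory.singleFunctor _ 0).obj (ZC P H) :=
    ExtZero.mapDerivedCategorySingleIso (ExtZero.eFunctor P H) Zc ≪≫
      (DerivedCategory.singleFunctor _ 0).mapIso (ExtZero.eZIso P H)
  let isoB : (ExtZero.rFunctor P).mapDerivedCategory.obj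
      (((DerivedCategory.singleFunctor _ 0).obj M)⟦(s : ℤ)⟧) ≅
        ((DerivedCategory.singleFunctor _ 0).obj ((ExtZero.rFunctor P).obj M))⟦(s : ℤ)⟧ :=
    ((ExtZero.rFunctor P).mapDerivedCategory.commShiftIso (s : ℤ)).app
        ((DerivedCategory.singleFunctor _ 0).obj M) ≪≫
      (shiftFunctor _ (s : ℤ)).mapIso
        (ExtZero.mapDerivedCategorySingleIso (ExtZero.rFunctor P) M)
  exact ⟨(Abelian.Ext.homAddEquiv).trans
    ((ExtZero.homCongrAddEquiv isoA.symm (Iso.refl _)).trans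
      ((ExtZero.adjHomAddEquiv adjD _ _).trans
        ((ExtZero.homCongrAddEquiv (Iso.refl _) isoB).trans
          (Abelian.Ext.homAddEquiv).symm)))⟩
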